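/- Let r ≥ 1 be an integer and let x > 0 be a real number with x ≠ 1. Then (1/(2π)) ∫_{−∞}^{∞} x^{2+it} / ((2+it)(3+it)⋯(2+r+it)) dt equals (1/r!)(1 − 1/x)^{r} if x > 1, and equals 0 if 0 < x < 1. Here x^{2+it} = e^{(2+it)·log x} with the real logarithm of x, and the denominator is ∏_{j=0}^{r} (2 + j + it). The integral is the contour integral (1/(2πi)) ∫_{(2)} x^{s}/(s(s+1)⋯(s+r)) ds over the vertical line Re(s) = 2. -/

import Mathlib

open MeasureTheory
open Finset Complex FourierTransform Real Filter

lemma cexp_integrableOn_Ioi (a : ℂ) (ha : 0 < a.re) :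
    IntegrableOn (fun y : ℝ => Complex.exp (-a * y)) (Set.Ioi 0) := by
  apply Integrable.mono' ((exp_neg_integrableOn_Ioi 0 ha).congr_fun
    (fun y _ => rfl) measurableSet_Ioi)
  · exact (Complex.continuous_exp.comp (by continuity)).aestronglyMeasurable.restrict
  · filter_upwards with y
    rw [Complex.norm_exp]
    simp [neg_mul, mul_comm]

lemma integral_cexp_Ioi (a : ℂ) (ha : 0 < a.re) :
    ∫ y in Set.Ioi (0:ℝ), Complex.exp (-a * y) = 1 / a := by
  have ha0 : a ≠ 0 := fun h => by simp [h] at ha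
  have hderiv : ∀ y ∈ Set.Ici (0:ℝ),
      HasDerivAt (fun y : ℝ => -Complex.exp (-a * y) / a) (Complex.exp (-a * y)) y := by
    intro y _
    have h1 : HasDerivAt (fun y : ℝ => Complex.exp (-a * y)) (-a * Complex.exp (-a * y)) y := by
      have := ((Complex.hasDerivAt_exp (-a * y)).comp y
        (((hasDerivAt_id (y:ℝ)).ofReal_comp).const_mul (-a)))
      simpa [mul_comm, Function.comp_def] using this
    have := (h1.div_const a).neg
    have e1 : (fun y : ℝ => -Complex.exp (-a * y) / a) = -fun x : ℝ => Complex.exp (-a * x) / a := by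
      funext z; simp [neg_div]
    have e2 : Complex.exp (-a * y) = -(-a * Complex.exp (-a * y) / a) := by
      rw [neg_mul a (Complex.exp _), neg_div, neg_neg, mul_div_cancel_left₀ _ ha0]
    rw [e1, e2]; exact this
  have htend : Tendsto (fun y : ℝ => -Complex.exp (-a * y) / a) atTop (nhds 0) := by
    rw [tendsto_zero_iff_norm_tendsto_zero]
    have : (fun y : ℝ => ‖-Complex.exp (-a * y) / a‖)
        = fun y : ℝ => Real.exp (-a.re * y) / ‖a‖ := by
      funext y
      rw [norm_div, norm_neg, Complex.norm_exp]
      simp [neg_mul, mul_comm]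
    rw [this]
    have : Tendsto (fun y : ℝ => Real.exp (-a.re * y)) atTop (nhds 0) :=
      Real.tendsto_exp_atBot.comp (tendsto_id.const_mul_atTop_of_neg (neg_lt_zero.2 ha))
    simpa using this.div_const ‖a‖
  have := integral_Ioi_of_hasDerivAt_of_tendsto' hderiv (cexp_integrableOn_Ioi a ha) htend
  rw [this]
  rw [zero_sub, Complex.ofReal_zero, mul_zero, Complex.exp_zero]
  field_simp

lemma partial_fraction : ∀ (r : ℕ) (s : ℂ), (∀ j : ℕ, j ≤ r → s + j ≠ 0) →
    ∑ j ∈ range (r+1), ((-1:ℂ)^j * (r.choose j)) / (s + j)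
      = (r.factorial : ℂ) / ∏ j ∈ range (r+1), (s + j) := by
  intro r
  induction r with
  | zero => intro s hs; simp
  | succ r ih =>
    intro s hs
    have hs0 : s ≠ 0 := by simpa using hs 0 (Nat.zero_le _)
    have hsucc : ∀ j : ℕ, j ≤ r → (s+1) + j ≠ 0 := by
      intro j hj
      have h := hs (j+1) (by omega)
      have e : s + ((j:ℕ)+1:ℕ) = (s+1) + j := by push_cast; ring
      rwa [e] at h
    have hsr : ∀ j : ℕ, j ≤ r → s + j ≠ 0 := fun j hj => hs j (by omega)
    have T1 := ih s hsr
    have T2 := ih (s+1) hsucc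
    have hP : (∏ j ∈ range (r+1), (s + j)) ≠ 0 :=
      prod_ne_zero_iff.2 fun j hj => hsr j (Nat.lt_succ_iff.1 (mem_range.1 hj))
    have hQ : (∏ j ∈ range (r+1), ((s+1) + j)) ≠ 0 :=
      prod_ne_zero_iff.2 fun j hj => hsucc j (Nat.lt_succ_iff.1 (mem_range.1 hj))
    set F : ℕ → ℂ := fun j => ((-1:ℂ)^j * (r.choose j)) / (s + j) with hF
    set G : ℕ → ℂ := fun j => ((-1:ℂ)^j * (r.choose j)) / ((s+1) + j) with hG
    set B : ℕ → ℂ := fun j => ((-1:ℂ)^j * ((r+1).choose j)) / (s + j) with hB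
    have hstep : ∀ i ∈ range (r+1), B (i+1) = F (i+1) - G i := by
      intro i _
      have hd : (s + ((i:ℕ)+1:ℕ)) = (s+1) + (i:ℕ) := by push_cast; ring
      simp only [hB, hF, hG, Nat.choose_succ_succ]
      rw [hd]
      push_cast
      rw [pow_succ]
      ring
    have hA : ∑ i ∈ range (r+1), F (i+1) = (∑ j ∈ range (r+1), F j) - F 0 := by
      have h1 := Finset.sum_range_succ' F (r+1)
      have h2 := Finset.sum_range_succ F (r+1)
      have h3 : F (r+1) = 0 := by simp [hF, Nat.choose_succ_self]
      rw [h3, add_zero] at h2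
      linear_combination h2 - h1
    have hB0 : B 0 = F 0 := by simp [hB, hF]
    have key : ∑ j ∈ range (r+2), B j
        = (∑ j ∈ range (r+1), F j) - ∑ j ∈ range (r+1), G j := by
      rw [Finset.sum_range_succ' B (r+1), Finset.sum_congr rfl hstep,
        Finset.sum_sub_distrib, hA, hB0]
      ring
    rw [key, T1, T2]
    have hprod1 : (∏ j ∈ range (r+2), (s + j)) = (∏ j ∈ range (r+1), (s + j)) * (s + ((r:ℂ)+1)) := by
      rw [Finset.prod_range_succ]
      push_cast
      ring
    have hprod2 : (∏ j ∈ range (r+2), (s + j)) = (∏ j ∈ range (r+1), ((s+1) + j)) * s := by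
      rw [Finset.prod_range_succ' (fun j => s + (j:ℂ)) (r+1)]
      simp only [Nat.cast_zero, add_zero, Nat.cast_add, Nat.cast_one]
      congr 1
      apply Finset.prod_congr rfl
      intro j _
      ring
    have hR : (∏ j ∈ range (r+2), (s + j)) ≠ 0 := by
      rw [hprod2]; exact mul_ne_zero hQ hs0
    have hfac : (Nat.factorial (r+1) : ℂ) = (r.factorial : ℂ) * ((r:ℂ)+1) := by
      rw [Nat.factorial_succ]; push_cast; ring
    rw [div_sub_div _ _ hP hQ, div_eq_div_iff (mul_ne_zero hP hQ) hR, hfac]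
    linear_combination ((r.factorial:ℂ) * (∏ j ∈ range (r+1), ((s+1) + j))) * hprod1
      - ((r.factorial:ℂ) * (∏ j ∈ range (r+1), (s + j))) * hprod2

lemma beta_int (r : ℕ) (s : ℂ) (hs : 0 < s.re) :
    ∫ y in Set.Ioi (0:ℝ), Complex.exp (-s * y) * (1 - Complex.exp (-(y:ℂ)))^r
      = (r.factorial : ℂ) / ∏ j ∈ range (r+1), (s + j) := by
  have hre : ∀ j : ℕ, 0 < (s + (j:ℂ)).re := by
    intro j
    simp only [Complex.add_re, Complex.natCast_re]
    positivity
  have hpt : ∀ y : ℝ, Complex.exp (-s*y) * (1 - Complex.exp (-(y:ℂ)))^r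
      = ∑ j ∈ range (r+1), ((-1:ℂ)^j * (r.choose j)) * Complex.exp (-(s+j)*y) := by
    intro y
    rw [sub_eq_add_neg, add_comm, add_pow, Finset.mul_sum]
    apply Finset.sum_congr rfl
    intro j _
    rw [neg_pow, ← Complex.exp_nat_mul, one_pow,
      show Complex.exp (-(s+(j:ℂ))*(y:ℂ))
        = Complex.exp (-s*(y:ℂ)) * Complex.exp ((j:ℂ)*(-(y:ℂ))) from by
        rw [← Complex.exp_add]; congr 1; ring]
    ring
  simp only [hpt]
  rw [MeasureTheory.integral_finset_sum (μ := volume.restrict (Set.Ioi 0)) (range (r+1))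
    (f := fun (j : ℕ) (y : ℝ) => ((-1:ℂ)^j * (r.choose j)) * Complex.exp (-(s+j)*y))
    (fun (j : ℕ) _ => ((cexp_integrableOn_Ioi (s+j) (hre j))).const_mul _)]
  calc ∑ j ∈ range (r+1), ∫ y in Set.Ioi (0:ℝ),
        ((-1:ℂ)^j * (r.choose j)) * Complex.exp (-(s+j)*y)
      = ∑ j ∈ range (r+1), ((-1:ℂ)^j * (r.choose j)) / (s + j) := by
        apply Finset.sum_congr rfl
        intro j _
        rw [MeasureTheory.integral_const_mul, integral_cexp_Ioi (s+j) (hre j)]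
        rw [mul_one_div]
    _ = _ := partial_fraction r s (fun j _ => by
        intro h
        have := hre j
        rw [h] at this
        simp at this)

noncomputable def hfun (r : ℕ) : ℝ → ℂ := Set.indicator (Set.Ioi 0)
  (fun y => (r.factorial : ℂ)⁻¹ * Complex.exp (-2*y) * (1 - Complex.exp (-(y:ℂ)))^r)

lemma hfun_cont : ∀ r : ℕ, Continuous
    (fun y : ℝ => (r.factorial : ℂ)⁻¹ * Complex.exp (-2*(y:ℂ)) * (1 - Complex.exp (-(y:ℂ)))^r) := by
  intro r
  fun_prop

lemma hfun_integrable (r : ℕ) : Integrable (hfun r) := by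
  rw [hfun, integrable_indicator_iff measurableSet_Ioi]
  apply Integrable.mono' (exp_neg_integrableOn_Ioi 0 two_pos)
  · exact (hfun_cont r).aestronglyMeasurable.restrict
  · filter_upwards [ae_restrict_mem measurableSet_Ioi] with y hy
    have hy0 : (0:ℝ) < y := hy
    rw [norm_mul, norm_mul]
    have h1 : ‖((r.factorial : ℂ))⁻¹‖ ≤ 1 := by
      rw [norm_inv]
      rw [← Complex.ofReal_natCast, Complex.norm_real, Real.norm_eq_abs, abs_of_pos (by positivity)]
      have : (1:ℝ) ≤ (r.factorial : ℝ) := by exact_mod_cast r.factorial_pos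
      rw [inv_le_one_iff₀]; right; exact this
    have h2 : ‖Complex.exp (-2*(y:ℂ))‖ = Real.exp (-2*y) := by
      rw [Complex.norm_exp]
      norm_num
    have h3 : ‖(1 - Complex.exp (-(y:ℂ)))^r‖ ≤ 1 := by
      rw [norm_pow]
      apply pow_le_one₀ (norm_nonneg _)
      have he : ((Real.exp (-y) : ℝ) : ℂ) = Complex.exp (-(y:ℂ)) := by
        rw [← Complex.ofReal_neg, Complex.ofReal_exp]
      rw [← he, ← Complex.ofReal_one, ← Complex.ofReal_sub, Complex.norm_real, Real.norm_eq_abs]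
      have hle : Real.exp (-y) ≤ 1 := Real.exp_le_one_iff.mpr (by linarith)
      have hpos := Real.exp_pos (-y)
      rw [_root_.abs_of_nonneg (by linarith)]
      linarith
    calc ‖((r.factorial : ℂ))⁻¹‖ * ‖Complex.exp (-2*(y:ℂ))‖ * ‖(1 - Complex.exp (-(y:ℂ)))^r‖
        ≤ 1 * Real.exp (-2*y) * 1 := by
          rw [h2]
          gcongr
      _ = Real.exp (-2*y) := by ring

lemma fourier_hfun (r : ℕ) (ξ : ℝ) :
    𝓕 (hfun r) ξ
      = 1 / ∏ j ∈ range (r+1), ((2:ℂ) + j + ((2*Real.pi*ξ:ℝ):ℂ)*Complex.I) := by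
  rw [Real.fourier_real_eq_integral_exp_smul]
  set s : ℂ := 2 + ((2*Real.pi*ξ:ℝ):ℂ)*Complex.I with hsdef
  have hsre : 0 < s.re := by
    simp [hsdef]
  have step1 : ∫ v : ℝ, Complex.exp (((-2 * π * v * ξ : ℝ) : ℂ) * Complex.I) • hfun r v
      = ∫ v in Set.Ioi (0:ℝ), (r.factorial : ℂ)⁻¹ *
          (Complex.exp (-s * v) * (1 - Complex.exp (-(v:ℂ)))^r) := by
    rw [← integral_indicator measurableSet_Ioi]
    congr 1
    funext v
    by_cases hv : v ∈ Set.Ioi (0:ℝ)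
    · rw [hfun, Set.indicator_of_mem hv, Set.indicator_of_mem hv, smul_eq_mul]
      have : Complex.exp (((-2 * π * v * ξ : ℝ) : ℂ) * Complex.I) * Complex.exp (-2*(v:ℂ))
          = Complex.exp (-s * v) := by
        rw [← Complex.exp_add]
        congr 1
        rw [hsdef]
        push_cast
        ring
      calc Complex.exp (((-2 * π * v * ξ : ℝ) : ℂ) * Complex.I) *
            ((r.factorial : ℂ)⁻¹ * Complex.exp (-2*(v:ℂ)) * (1 - Complex.exp (-(v:ℂ)))^r)
          = (r.factorial : ℂ)⁻¹ * ((Complex.exp (((-2 * π * v * ξ : ℝ) : ℂ) * Complex.I) *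
              Complex.exp (-2*(v:ℂ))) * (1 - Complex.exp (-(v:ℂ)))^r) := by ring
        _ = _ := by rw [this]
    · rw [hfun, Set.indicator_of_notMem hv, Set.indicator_of_notMem hv, smul_zero]
  rw [step1, MeasureTheory.integral_const_mul, beta_int r s hsre]
  have hfac : (r.factorial : ℂ) ≠ 0 := by
    exact_mod_cast r.factorial_ne_zero
  have : ∏ j ∈ range (r+1), (s + j) = ∏ j ∈ range (r+1), ((2:ℂ) + j + ((2*Real.pi*ξ:ℝ):ℂ)*Complex.I) := by
    apply Finset.prod_congr rfl
    intro j _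
    rw [hsdef]; ring
  rw [this, mul_div_assoc', inv_mul_cancel₀ hfac]

lemma norm_factor_ge_one (t : ℝ) (j : ℕ) : (1:ℝ) ≤ ‖(2:ℂ) + j + (t:ℂ)*Complex.I‖ := by
  have hre : ((2:ℂ) + j + (t:ℂ)*Complex.I).re = 2 + j := by simp
  calc (1:ℝ) ≤ |((2:ℂ) + j + (t:ℂ)*Complex.I).re| := by
        rw [hre, _root_.abs_of_nonneg (by positivity)]
        have : (0:ℝ) ≤ (j:ℝ) := Nat.cast_nonneg j
        linarith
    _ ≤ ‖(2:ℂ) + j + (t:ℂ)*Complex.I‖ := Complex.abs_re_le_norm _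

lemma fourier_hfun_integrable (r : ℕ) (hr : 1 ≤ r) : Integrable (𝓕 (hfun r)) := by
  apply Integrable.mono' integrable_inv_one_add_sq
  · exact (VectorFourier.fourierIntegral_continuous Real.continuous_fourierChar
      (by exact continuous_inner) (hfun_integrable r)).aestronglyMeasurable
  · filter_upwards with ξ
    rw [fourier_hfun r ξ]
    set t : ℝ := 2*Real.pi*ξ with ht
    rw [norm_div, norm_one, norm_prod]
    set a : ℕ → ℝ := fun j => ‖(2:ℂ) + j + (t:ℂ)*Complex.I‖ with ha
    have hsub : ({0,1} : Finset ℕ) ⊆ range (r+1) := by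
      intro j hj
      simp only [Finset.mem_insert, Finset.mem_singleton] at hj
      simp only [Finset.mem_range]
      omega
    have hpair : ∏ j ∈ ({0,1} : Finset ℕ), a j = a 0 * a 1 :=
      Finset.prod_pair (by norm_num)
    have hrest : (1:ℝ) ≤ ∏ j ∈ range (r+1) \ ({0,1} : Finset ℕ), a j := by
      calc (1:ℝ) = ∏ j ∈ range (r+1) \ ({0,1} : Finset ℕ), (1:ℝ) := by
            rw [Finset.prod_const_one]
        _ ≤ _ := Finset.prod_le_prod (by intros; norm_num)
            (fun i _ => norm_factor_ge_one t i)
    have hpairnn : (0:ℝ) ≤ ∏ j ∈ ({0,1} : Finset ℕ), a j := by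
      rw [hpair]; positivity
    have h2 : ∏ j ∈ ({0,1} : Finset ℕ), a j ≤ ∏ j ∈ range (r+1), a j := by
      rw [← Finset.prod_sdiff hsub]
      exact le_mul_of_one_le_left hpairnn hrest
    have ha0 : (a 0)^2 = 4 + t^2 := by
      rw [ha]
      simp only [Nat.cast_zero, add_zero]
      rw [Complex.sq_norm, Complex.normSq_apply]
      simp
      ring
    have ha1 : (a 1)^2 = 9 + t^2 := by
      rw [ha]
      simp only [Nat.cast_one]
      rw [Complex.sq_norm, Complex.normSq_apply]
      simp
      ring
    have na0 : 0 ≤ a 0 := norm_nonneg _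
    have na1 : 0 ≤ a 1 := norm_nonneg _
    have ha01 : a 0 ≤ a 1 := by nlinarith
    have hkey : (1:ℝ) + ξ^2 ≤ a 0 * a 1 := by
      have h1 : (a 0)^2 ≤ a 0 * a 1 := by nlinarith
      have hpi := Real.pi_gt_three
      have : (1:ℝ) + ξ^2 ≤ 4 + t^2 := by
        rw [ht]
        have hpi2 : (9:ℝ) ≤ Real.pi^2 := by nlinarith
        nlinarith [sq_nonneg ξ, mul_le_mul_of_nonneg_left hpi2 (sq_nonneg ξ)]
      linarith [ha0 ▸ h1]
    have hposd : (0:ℝ) < 1 + ξ^2 := by positivity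
    rw [one_div]
    apply inv_anti₀ hposd
    calc (1:ℝ) + ξ^2 ≤ a 0 * a 1 := hkey
      _ = _ := hpair.symm
      _ ≤ _ := h2



/-- Discontinuous integral formula of Perron type: for an integer `r ≥ 1` and a real
`x > 0` with `x ≠ 1`,
`(1/(2π)) ∫_{−∞}^{∞} x^{2+it} / ((2+it)(3+it)⋯(2+r+it)) dt`
equals `(1/r!)(1 − 1/x)^r` if `x > 1` and `0` if `0 < x < 1`. Here
`x^{2+it} = exp((2+it) log x)` with the real logarithm of `x`. -/
theorem perron_discontinuous_integral (r : ℕ) (hr : 1 ≤ r) (x : ℝ) (hx : 0 < x)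
    (hx1 : x ≠ 1) :
    (1 / (2 * Real.pi) : ℂ) * ∫ t : ℝ,
        Complex.exp (((2 : ℂ) + (t : ℂ) * Complex.I) * (Real.log x : ℂ)) /
          ∏ j ∈ Finset.range (r + 1), ((2 : ℂ) + (j : ℂ) + (t : ℂ) * Complex.I)
      = if 1 < x then ((1 / (Nat.factorial r) : ℂ) * (1 - 1 / (x : ℂ)) ^ r) else 0 := by
  set L : ℝ := Real.log x with hLdef
  -- continuity of hfun at L
  have hcont : ContinuousAt (hfun r) L := by
    rcases lt_trichotomy x 1 with hlt | heq | hgt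
    · have hLneg : L < 0 := Real.log_neg hx hlt
      have hev : (fun _ : ℝ => (0:ℂ)) =ᶠ[nhds L] hfun r := by
        filter_upwards [Iio_mem_nhds hLneg] with y hy
        rw [hfun, Set.indicator_of_notMem (by simpa using le_of_lt hy)]
      exact continuousAt_const.congr hev
    · exact absurd heq hx1
    · have hLpos : 0 < L := Real.log_pos hgt
      have hev : (fun y : ℝ => (r.factorial : ℂ)⁻¹ * Complex.exp (-2*(y:ℂ)) *
          (1 - Complex.exp (-(y:ℂ)))^r) =ᶠ[nhds L] hfun r := by
        filter_upwards [Ioi_mem_nhds hLpos] with y hy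
        rw [hfun, Set.indicator_of_mem hy]
      exact (hfun_cont r).continuousAt.congr hev
  have hinv := (hfun_integrable r).fourierInv_fourier_eq (fourier_hfun_integrable r hr) hcont
  -- evaluate the inverse Fourier integral
  set Φ : ℝ → ℂ := fun t => Complex.exp ((t:ℂ)*(L:ℂ)*Complex.I) /
    ∏ j ∈ range (r+1), ((2:ℂ) + j + (t:ℂ)*Complex.I) with hΦ
  have heval : 𝓕⁻ (𝓕 (hfun r)) L = ∫ ξ : ℝ, Φ (2*Real.pi*ξ) := by
    rw [Real.fourierInv_eq_fourier_neg,
      Real.fourier_real_eq_integral_exp_smul]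
    congr 1
    funext ξ
    rw [fourier_hfun r ξ, smul_eq_mul, hΦ]
    rw [mul_one_div]
    congr 2
    push_cast
    ring
  have hchg : ∫ ξ : ℝ, Φ (2*Real.pi*ξ) = ((2*Real.pi)⁻¹ : ℝ) • ∫ t : ℝ, Φ t := by
    rw [MeasureTheory.Measure.integral_comp_mul_left Φ (2*Real.pi)]
    congr 1
    rw [abs_of_pos (by positivity)]
  -- rewrite the target integral
  have hpt : ∀ t : ℝ, Complex.exp (((2 : ℂ) + (t : ℂ) * Complex.I) * (L : ℂ)) /
      ∏ j ∈ range (r + 1), ((2 : ℂ) + (j : ℂ) + (t : ℂ) * Complex.I)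
      = Complex.exp (2*(L:ℂ)) * Φ t := by
    intro t
    rw [hΦ, mul_div_assoc', ← Complex.exp_add]
    congr 2
    ring
  calc (1 / (2 * Real.pi) : ℂ) * ∫ t : ℝ,
        Complex.exp (((2 : ℂ) + (t : ℂ) * Complex.I) * (L : ℂ)) /
          ∏ j ∈ range (r + 1), ((2 : ℂ) + (j : ℂ) + (t : ℂ) * Complex.I)
      = (1 / (2 * Real.pi) : ℂ) * (Complex.exp (2*(L:ℂ)) * ∫ t : ℝ, Φ t) := by
        congr 1
        simp only [hpt]
        exact MeasureTheory.integral_const_mul _ _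
    _ = Complex.exp (2*(L:ℂ)) * (((2*Real.pi)⁻¹ : ℝ) • ∫ t : ℝ, Φ t) := by
        rw [Complex.real_smul]
        push_cast
        ring
    _ = Complex.exp (2*(L:ℂ)) * hfun r L := by rw [← hchg, ← heval, hinv]
    _ = if 1 < x then ((1 / (Nat.factorial r) : ℂ) * (1 - 1 / (x : ℂ)) ^ r) else 0 := by
        rcases lt_trichotomy x 1 with hlt | heq | hgt
        · have hLneg : L < 0 := Real.log_neg hx hlt
          rw [hfun, Set.indicator_of_notMem (by simpa using le_of_lt hLneg), mul_zero,
            if_neg (by linarith)]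
        · exact absurd heq hx1
        · have hLpos : 0 < L := Real.log_pos hgt
          rw [hfun, Set.indicator_of_mem (by exact hLpos), if_pos hgt]
          have hxL : Complex.exp (-(L:ℂ)) = 1 / (x:ℂ) := by
            rw [← Complex.ofReal_neg, ← Complex.ofReal_exp]
            rw [hLdef, Real.exp_neg, Real.exp_log hx]
            push_cast
            rw [one_div]
          rw [hxL]
          rw [show Complex.exp (2*(L:ℂ)) * ((r.factorial : ℂ)⁻¹ *
              Complex.exp (-2*(L:ℂ)) * (1 - 1/(x:ℂ))^r)
            = (Complex.exp (2*(L:ℂ)) * Complex.exp (-2*(L:ℂ))) *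
              ((r.factorial : ℂ)⁻¹ * (1 - 1/(x:ℂ))^r) from by ring]
          rw [← Complex.exp_add]
          norm_num
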